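/- For every infinite set A ⊆ ℤ⁺ there exists an infinite set B ⊆ ℤ⁺ such that B is Turing reducible to A, B has apartness, and FS(B) ⊆ FS(A). -/

import Mathlib

/-- `mu x = ⌊log₂ x⌋`, the exponent of the highest power of 2 in the binary expansion of `x`. -/
def mu (x : ℕ) : ℕ := Nat.log 2 x

/-- `lam x` is the 2-adic valuation of `x`, the exponent of the lowest power of 2
in the binary expansion of `x`. -/
def lam (x : ℕ) : ℕ := padicValNat 2 x

/-- A set `A ⊆ ℤ⁺` has apartness if `μ(x) < λ(y)` for all `x < y` in `A`. -/
def Apart (A : Set ℕ) : Prop := ∀ x ∈ A, ∀ y ∈ A, x < y → mu x < lam y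

/-- `FS A`: all finite sums of distinct elements of `A`. -/
def FS (A : Set ℕ) : Set ℕ :=
  {n | ∃ F : Finset ℕ, ↑F ⊆ A ∧ F.Nonempty ∧ F.sum id = n}

/-- Partial recursiveness relative to an oracle `g : ℕ →. ℕ`; this is `Nat.Partrec`
augmented with an oracle clause. -/
inductive OracleRecursiveIn (g : ℕ →. ℕ) : (ℕ →. ℕ) → Prop
  | zero : OracleRecursiveIn g (pure 0)
  | succ : OracleRecursiveIn g Nat.succ
  | left : OracleRecursiveIn g ↑fun n : ℕ => n.unpair.1
  | right : OracleRecursiveIn g ↑fun n : ℕ => n.unpair.2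
  | oracle : OracleRecursiveIn g g
  | pair {f h : ℕ →. ℕ} : OracleRecursiveIn g f → OracleRecursiveIn g h →
      OracleRecursiveIn g fun n => Nat.pair <$> f n <*> h n
  | comp {f h : ℕ →. ℕ} : OracleRecursiveIn g f → OracleRecursiveIn g h →
      OracleRecursiveIn g fun n => h n >>= f
  | prec {f h : ℕ →. ℕ} : OracleRecursiveIn g f → OracleRecursiveIn g h →
      OracleRecursiveIn g (Nat.unpaired fun a n =>
        n.rec (f a) fun y IH => do let i ← IH; h (Nat.pair a (Nat.pair y i)))
  | rfind {f : ℕ →. ℕ} : OracleRecursiveIn g f →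
      OracleRecursiveIn g fun a => Nat.rfind fun n => (fun m => m = 0) <$> f (Nat.pair a n)

/-- The characteristic function of a set of naturals, as a partial function. -/
noncomputable def chi (A : Set ℕ) : ℕ →. ℕ :=
  fun n => Part.some (A.indicator (fun _ => 1) n)

/-- `B` is Turing reducible to `A`: the characteristic function of `B` is
computable relative to the oracle `A`. -/
def TuringRed (B A : Set ℕ) : Prop := OracleRecursiveIn (chi A) (chi B)

-- ### Auxiliary development
namespace S5

/-- reversed prefix sums -/
def psOf (l : List ℕ) : List ℕ := l.foldl (fun acc x => (acc.headI + x) :: acc) [0]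

theorem psOf_nil : psOf [] = [0] := rfl

theorem psOf_append (l : List ℕ) (x : ℕ) :
    psOf (l ++ [x]) = ((psOf l).headI + x) :: psOf l := by
  simp [psOf, List.foldl_append]

theorem psOf_head (l : List ℕ) : (psOf l).headI = l.sum := by
  induction l using List.reverseRecOn with
  | nil => simp [psOf_nil]
  | append_singleton l x ih => simp [psOf_append, ih]

theorem psOf_ne_nil (l : List ℕ) : psOf l ≠ [] := by
  induction l using List.reverseRecOn with
  | nil => simp [psOf_nil]
  | append_singleton l x ih => simp [psOf_append]

theorem length_psOf (l : List ℕ) : (psOf l).length = l.length + 1 := by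
  induction l using List.reverseRecOn with
  | nil => simp [psOf_nil]
  | append_singleton l x ih => simp [psOf_append, ih]

theorem mem_psOf {l : List ℕ} {y : ℕ} (h : y ∈ psOf l) :
    ∃ j ≤ l.length, y = (l.take j).sum := by
  induction l using List.reverseRecOn with
  | nil =>
    simp [psOf_nil] at h
    exact ⟨0, by simp, by simp [h]⟩
  | append_singleton l x ih =>
    rw [psOf_append] at h
    rcases List.mem_cons.1 h with h | h
    · exact ⟨l.length + 1, by simp, by simp [h, psOf_head, List.take_append_of_le_length]⟩
    · obtain ⟨j, hj, hy⟩ := ih h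
      exact ⟨j, by simp [Nat.le_succ_of_le hj],
        by rw [List.take_append_of_le_length hj]; exact hy⟩

theorem mem_psOf_le_sum {l : List ℕ} {y : ℕ} (h : y ∈ psOf l) : y ≤ l.sum := by
  obtain ⟨j, _, rfl⟩ := mem_psOf h
  calc (l.take j).sum ≤ (l.take j).sum + (l.drop j).sum := Nat.le_add_right _ _
    _ = l.sum := List.sum_take_add_sum_drop l j

/-- one step of the block-building machine. State: (modulus exponent, reversed
prefix sums of pending elements, produced blocks). -/
def step (s : ℕ × List ℕ × List ℕ) (x : ℕ) : ℕ × List ℕ × List ℕ :=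
  let c := s.2.1.headI + x
  let hits := s.2.1.filter (fun y => c % 2 ^ s.1 = y % 2 ^ s.1)
  if hits.length = 0 then (s.1, c :: s.2.1, s.2.2)
  else (c - hits.headI, [0], s.2.2 ++ [c - hits.headI])

def run (L : List ℕ) : ℕ × List ℕ × List ℕ := L.foldl step (0, [0], [])

def blocksF (L : List ℕ) : List ℕ := (run L).2.2

theorem run_append (L : List ℕ) (x : ℕ) : run (L ++ [x]) = step (run L) x := by
  simp [run, List.foldl_append]

/-- out component only grows -/
theorem out_step_prefix (s : ℕ × List ℕ × List ℕ) (x : ℕ) :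
    s.2.2 <+: (step s x).2.2 := by
  unfold step
  dsimp only
  split
  · exact List.prefix_refl _
  · exact ⟨_, rfl⟩

theorem out_foldl_prefix (T : List ℕ) (s : ℕ × List ℕ × List ℕ) :
    s.2.2 <+: (T.foldl step s).2.2 := by
  induction T generalizing s with
  | nil => exact List.prefix_refl _
  | cons x T ih => exact (out_step_prefix s x).trans (ih (step s x))

theorem blocksF_prefix (L T : List ℕ) : blocksF L <+: blocksF (L ++ T) := by
  rw [blocksF, blocksF, run, run, List.foldl_append]
  exact out_foldl_prefix T _

end S5
namespace S5

def SInv (P : List ℕ) (s : ℕ × List ℕ × List ℕ) : Prop :=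
  ∃ (t : ℕ) (G : List (Finset ℕ)),
    t ≤ P.length ∧
    s.2.1 = psOf (P.drop t) ∧
    List.Forall₂ (fun (F : Finset ℕ) b => F.sum id = b ∧ F.Nonempty) G s.2.2 ∧
    (∀ F ∈ G, ∀ e ∈ F, e ∈ P.take t) ∧
    List.Pairwise Disjoint G ∧
    (s.2.1.map (· % 2 ^ s.1)).Nodup ∧
    (∀ b ∈ s.2.2, 0 < b) ∧
    (∀ b ∈ s.2.2, mu b < s.1) ∧
    List.Pairwise (fun u v => mu u < lam v) s.2.2

theorem inv_nil : SInv [] (run []) :=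
  ⟨0, [], by simp, by simp [run, psOf_nil], by simp [run], by simp, by simp,
    by simp [run, psOf_nil], by simp [run], by simp [run], by simp [run]⟩

theorem lam_le_mu {b : ℕ} (hb : 0 < b) : lam b ≤ mu b := by
  have h2 : 2 ^ lam b ≤ b := Nat.le_of_dvd hb pow_padicValNat_dvd
  exact (Nat.le_log_iff_pow_le one_lt_two hb.ne').2 h2

theorem lt_of_mu_lt_lam {u v : ℕ} (hv : 0 < v) (h : mu u < lam v) : u < v := by
  have h1 : u < 2 ^ (mu u + 1) := Nat.lt_pow_succ_log_self one_lt_two u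
  have h2 : 2 ^ (mu u + 1) ≤ 2 ^ lam v := Nat.pow_le_pow_right (by norm_num) h
  have h3 : 2 ^ lam v ≤ v := Nat.le_of_dvd hv pow_padicValNat_dvd
  omega

theorem inv_step {P : List ℕ} {x : ℕ} (hlt : ∀ e ∈ P, e < x) (hx : 0 < x)
    (hnd : P.Nodup) {s : ℕ × List ℕ × List ℕ} (h : SInv P s) :
    SInv (P ++ [x]) (step s x) := by
  obtain ⟨t, G, ht, hps, hG, hGsub, hdisj, hres, hpos, hmu, hchain⟩ := h
  set m := s.1 with hm
  set ps := s.2.1 with hps0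
  set out := s.2.2 with hout0
  set c := ps.headI + x with hc
  set hits := ps.filter (fun y => decide (c % 2 ^ m = y % 2 ^ m)) with hhits
  by_cases h0 : hits.length = 0
  · -- no production
    have hstep : step s x = (m, c :: ps, out) := by
      rw [step]
      simp only [← hm, ← hps0, ← hout0, ← hc, ← hhits]
      rw [if_pos h0]
    rw [hstep]
    refine ⟨t, G, by simp; omega, ?_, hG, ?_, hdisj, ?_, hpos, hmu, hchain⟩
    · show c :: ps = psOf ((P ++ [x]).drop t)
      rw [List.drop_append_of_le_length ht, psOf_append, ← hps, hc, hps, psOf_head]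
    · intro F hF e he
      rw [List.take_append_of_le_length ht]
      exact hGsub F hF e he
    · -- residues nodup
      show ((c :: ps).map (· % 2 ^ m)).Nodup
      rw [List.map_cons, List.nodup_cons]
      refine ⟨fun hmem => ?_, hres⟩
      obtain ⟨y, hy, hy2⟩ := List.mem_map.1 hmem
      have : y ∈ hits := List.mem_filter.2 ⟨hy, by simp [hy2]⟩
      rw [List.length_eq_zero_iff] at h0
      simp [h0] at this
  · -- production
    have hhd : hits.headI ∈ hits := by
      cases hcase : hits with
      | nil => rw [hcase] at h0; simp at h0
      | cons a l => simp [hcase]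
    have hyps : hits.headI ∈ ps := (List.mem_filter.1 hhd).1
    have hyres : c % 2 ^ m = hits.headI % 2 ^ m := by
      have := (List.mem_filter.1 hhd).2
      simpa using this
    set y := hits.headI with hy
    set b := c - y with hb
    have hstep : step s x = (b, [0], out ++ [b]) := by
      rw [step]
      simp only [← hm, ← hps0, ← hout0, ← hc, ← hhits]
      rw [if_neg h0]
    set pend := P.drop t with hpend
    have hpsOf : ps = psOf pend := hps
    obtain ⟨j, hj, hyj⟩ := mem_psOf (hpsOf ▸ hyps)
    have hcsum : c = pend.sum + x := by rw [hc, hpsOf, psOf_head]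
    have hyle : y ≤ pend.sum := mem_psOf_le_sum (hpsOf ▸ hyps)
    have hbval : b = (pend.drop j).sum + x := by
      rw [hb, hcsum, hyj]
      have := List.sum_take_add_sum_drop pend j
      omega
    have hbpos : 0 < b := by omega
    have hdvd : 2 ^ m ∣ b :=
      Nat.dvd_of_mod_eq_zero (Nat.sub_mod_eq_zero_of_mod_eq hyres)
    have hlamb : m ≤ lam b := by
      have : Fact (Nat.Prime 2) := ⟨Nat.prime_two⟩
      rcases (padicValNat_dvd_iff m b).1 hdvd with h | h
      · omega
      · exact h
    have hmub : mu b < b := Nat.log_lt_self 2 hbpos.ne'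
    have hmle : m ≤ mu b := le_trans hlamb (lam_le_mu hbpos)
    rw [hstep]
    have hxP : x ∉ P := fun hxp => absurd (hlt x hxp) (lt_irrefl x)
    have hndx : (P ++ [x]).Nodup := by
      rw [List.nodup_append]
      exact ⟨hnd, List.nodup_singleton x, fun e he f hf hef => by
        simp at hf; exact hxP (by rw [← hf, ← hef]; exact he)⟩
    have hsubl : (pend.drop j ++ [x]).Sublist (P ++ [x]) :=
      List.Sublist.append ((List.drop_sublist j pend).trans (List.drop_sublist t P))
        (List.Sublist.refl _)
    have hndF : (pend.drop j ++ [x]).Nodup := hndx.sublist hsubl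
    set Fnew : Finset ℕ := (pend.drop j ++ [x]).toFinset with hF
    have hFsum : Fnew.sum id = b := by
      rw [hF, List.sum_toFinset _ hndF, List.map_id, List.sum_append]
      simp [hbval]
    have hFne : Fnew.Nonempty := ⟨x, by simp [hF]⟩
    have htake : (P ++ [x]).take (P ++ [x]).length = P ++ [x] := List.take_length
    have hFsub' : ∀ e ∈ Fnew, e ∈ P ++ [x] := by
      intro e he
      rcases List.mem_append.1 (List.mem_toFinset.1 he) with h1 | h1
      · exact List.mem_append.2 (Or.inl (List.mem_of_mem_drop (List.mem_of_mem_drop h1)))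
      · exact List.mem_append.2 (Or.inr h1)
    refine ⟨(P ++ [x]).length, G ++ [Fnew], le_refl _, ?_, ?_, ?_, ?_, ?_, ?_, ?_, ?_⟩
    · show [0] = psOf ((P ++ [x]).drop (P ++ [x]).length)
      rw [List.drop_length, psOf_nil]
    · exact List.rel_append hG (List.Forall₂.cons ⟨hFsum, hFne⟩ List.Forall₂.nil)
    · intro F hFmem e he
      rw [htake]
      rcases List.mem_append.1 hFmem with h1 | h1
      · exact List.mem_append.2 (Or.inl (List.mem_of_mem_take (hGsub F h1 e he)))
      · rcases List.mem_singleton.1 h1 with rfl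
        exact hFsub' e he
    · rw [List.pairwise_append]
      refine ⟨hdisj, List.pairwise_singleton _ _, ?_⟩
      intro F hFmem F' hF'
      rcases List.mem_singleton.1 hF' with rfl
      rw [Finset.disjoint_left]
      intro e heF heN
      have het : e ∈ P.take t := hGsub F hFmem e heF
      have hePdisj : e ∉ P.drop t ∧ e ≠ x := by
        constructor
        · intro hed
          have := (List.nodup_append.1 (by rw [List.take_append_drop t P]; exact hnd)).2.2
          exact this e het e hed rfl
        · intro hex
          exact hxP (hex ▸ List.mem_of_mem_take het)
      rcases List.mem_append.1 (List.mem_toFinset.1 heN) with h1 | h1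
      · exact hePdisj.1 (List.mem_of_mem_drop h1)
      · exact hePdisj.2 (List.mem_singleton.1 h1)
    · show (([0] : List ℕ).map (· % 2 ^ b)).Nodup
      simp
    · intro bb hbb
      rcases List.mem_append.1 hbb with h | h
      · exact hpos bb h
      · rw [List.mem_singleton.1 h]; exact hbpos
    · intro bb hbb
      rcases List.mem_append.1 hbb with h | h
      · have := hmu bb h; omega
      · rw [List.mem_singleton.1 h]; omega
    · rw [List.pairwise_append]
      refine ⟨hchain, List.pairwise_singleton _ _, ?_⟩
      intro u hu v hv
      rcases List.mem_singleton.1 hv with rfl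
      exact lt_of_lt_of_le (hmu u hu) hlamb

end S5
namespace S5

theorem inv_run {L : List ℕ} (hs : List.Pairwise (· < ·) L) (hp : ∀ e ∈ L, 0 < e) :
    SInv L (run L) := by
  induction L using List.reverseRecOn with
  | nil => exact inv_nil
  | append_singleton P x ih =>
    rw [run_append]
    have hP : List.Pairwise (· < ·) P := (List.pairwise_append.1 hs).1
    have hlt : ∀ e ∈ P, e < x := fun e he => (List.pairwise_append.1 hs).2.2 e he x (by simp)
    have hnd : P.Nodup := hP.imp Nat.ne_of_lt
    exact inv_step hlt (hp x (by simp)) hnd (ih hP (fun e he => hp e (by simp [he])))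

/-- shape of a step -/
theorem step_shape (s : ℕ × List ℕ × List ℕ) (x : ℕ) :
    (step s x = (s.1, (s.2.1.headI + x) :: s.2.1, s.2.2)) ∨
    (∃ y ∈ s.2.1, step s x = (s.2.1.headI + x - y, [0], s.2.2 ++ [s.2.1.headI + x - y])) := by
  rw [step]
  split
  · exact Or.inl rfl
  · rename_i h0
    refine Or.inr ⟨(s.2.1.filter (fun y => decide ((s.2.1.headI + x) % 2 ^ s.1 = y % 2 ^ s.1))).headI, ?_, rfl⟩
    have hhd : (s.2.1.filter (fun y => decide ((s.2.1.headI + x) % 2 ^ s.1 = y % 2 ^ s.1))).headI ∈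
        (s.2.1.filter (fun y => decide ((s.2.1.headI + x) % 2 ^ s.1 = y % 2 ^ s.1))) := by
      cases hcase : (s.2.1.filter (fun y => decide ((s.2.1.headI + x) % 2 ^ s.1 = y % 2 ^ s.1))) with
      | nil => rw [hcase] at h0; simp at h0
      | cons a l => simp [hcase]
    exact (List.mem_filter.1 hhd).1

/-- a newly produced block dominates the new element -/
theorem step_new_ge {P : List ℕ} {x : ℕ} {s : ℕ × List ℕ × List ℕ} (h : SInv P s) {b : ℕ}
    (hb : b ∈ (step s x).2.2) (hbo : b ∉ s.2.2) : x ≤ b := by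
  obtain ⟨t, G, ht, hps, hG, hGsub, hdisj, hres, hpos, hmu, hchain⟩ := h
  rcases step_shape s x with h1 | ⟨y, hy, h1⟩
  · rw [h1] at hb; exact absurd hb hbo
  · rw [h1] at hb
    rcases List.mem_append.1 hb with h2 | h2
    · exact absurd h2 hbo
    · rw [List.mem_singleton.1 h2]
      have hyle : y ≤ s.2.1.headI := by
        rw [hps] at hy ⊢
        rw [psOf_head]
        exact mem_psOf_le_sum hy
      omega

theorem mem_blocks_dom {L : List ℕ} (hs : List.Pairwise (· < ·) L) (hp : ∀ e ∈ L, 0 < e)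
    {b : ℕ} (hb : b ∈ blocksF L) :
    ∃ Q R, L = Q ++ R ∧ (∀ e ∈ Q, e ≤ b) ∧ b ∈ blocksF Q := by
  induction L using List.reverseRecOn with
  | nil => simp [blocksF, run] at hb
  | append_singleton P x ih =>
    have hP : List.Pairwise (· < ·) P := (List.pairwise_append.1 hs).1
    have hlt : ∀ e ∈ P, e < x := fun e he => (List.pairwise_append.1 hs).2.2 e he x (by simp)
    have hpP : ∀ e ∈ P, 0 < e := fun e he => hp e (by simp [he])
    by_cases hbP : b ∈ blocksF P
    · obtain ⟨Q, R, hQR, hQle, hQb⟩ := ih hP hpP hbP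
      exact ⟨Q, R ++ [x], by rw [hQR, List.append_assoc], hQle, hQb⟩
    · have hinv := inv_run hP hpP
      have hb' : b ∈ (step (run P) x).2.2 := by rwa [blocksF, run_append] at hb
      have hxb : x ≤ b := step_new_ge hinv hb' hbP
      exact ⟨P ++ [x], [], by simp, fun e he => by
        rcases List.mem_append.1 he with h | h
        · exact le_of_lt (lt_of_lt_of_le (hlt e h) hxb)
        · rw [List.mem_singleton.1 h]; exact hxb, hb⟩

/-- if no block is produced, ps grows and m stays -/
theorem no_production {T : List ℕ} : ∀ {s : ℕ × List ℕ × List ℕ},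
    (T.foldl step s).2.2 = s.2.2 →
    (T.foldl step s).2.1.length = s.2.1.length + T.length ∧ (T.foldl step s).1 = s.1 := by
  induction T with
  | nil => intro s _; simp
  | cons x T ih =>
    intro s hout
    rw [List.foldl_cons] at hout ⊢
    have hpre1 : s.2.2 <+: (step s x).2.2 := out_step_prefix s x
    have hpre2 : (step s x).2.2 <+: (T.foldl step (step s x)).2.2 := out_foldl_prefix T _
    have heq : (step s x).2.2 = s.2.2 := by
      have h1 := hpre1.length_le
      have h2 := hpre2.length_le
      rw [hout] at h2
      exact (hpre1.sublist.eq_of_length (le_antisymm h1 h2)).symm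
    rcases step_shape s x with h1 | ⟨y, hy, h1⟩
    · obtain ⟨ih1, ih2⟩ := ih (s := step s x) (by rw [heq]; exact hout)
      refine ⟨?_, by rw [ih2, h1]⟩
      rw [ih1, h1]
      simp
      omega
    · rw [h1] at heq
      simp at heq
end S5
namespace S5

theorem nodup_bound {l : List ℕ} (hnd : l.Nodup) {n : ℕ} (hlt : ∀ y ∈ l, y < n) :
    l.length ≤ n := by
  have h1 : l.toFinset ⊆ Finset.range n := fun y hy =>
    Finset.mem_range.2 (hlt y (List.mem_toFinset.1 hy))
  have h2 := Finset.card_le_card h1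
  rw [List.toFinset_card_of_nodup hnd, Finset.card_range] at h2
  exact h2

theorem ps_length_le {L : List ℕ} (h : SInv L (run L)) :
    (run L).2.1.length ≤ 2 ^ (run L).1 := by
  obtain ⟨t, G, ht, hps, hG, hGsub, hdisj, hres, hpos, hmu, hchain⟩ := h
  have := nodup_bound hres (n := 2 ^ (run L).1) (fun y hy => by
    obtain ⟨z, _, rfl⟩ := List.mem_map.1 hy
    exact Nat.mod_lt _ (Nat.two_pow_pos _))
  simpa using this

theorem out_grows {L T : List ℕ} (hs : List.Pairwise (· < ·) (L ++ T))
    (hp : ∀ e ∈ L ++ T, 0 < e) (hlen : 2 ^ (run L).1 + 1 ≤ T.length) :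
    (blocksF L).length < (blocksF (L ++ T)).length := by
  have hpre : blocksF L <+: blocksF (L ++ T) := blocksF_prefix L T
  rcases lt_or_ge (blocksF L).length (blocksF (L ++ T)).length with h | h
  · exact h
  · exfalso
    have heq : blocksF L = blocksF (L ++ T) := hpre.sublist.eq_of_length
        (le_antisymm hpre.length_le h)
    have hrunLT : run (L ++ T) = T.foldl step (run L) := by rw [run, run, List.foldl_append]
    have hout : (T.foldl step (run L)).2.2 = (run L).2.2 := by
      rw [← hrunLT]
      exact (heq.symm : blocksF (L ++ T) = blocksF L)
    obtain ⟨h1, h2⟩ := no_production hout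
    have hinvT : SInv (L ++ T) (run (L ++ T)) := inv_run hs hp
    have hble := ps_length_le hinvT
    rw [hrunLT] at hble
    rw [h2] at hble
    have hps1 : 1 ≤ (run L).2.1.length := by
      have hinvL : SInv L (run L) := inv_run (List.pairwise_append.1 hs).1
        (fun e he => hp e (List.mem_append.2 (Or.inl he)))
      obtain ⟨t, G, ht, hps, _⟩ := hinvL
      rw [hps, length_psOf]
      omega
    omega

end S5
namespace S5

open Classical in
noncomputable def listOfSet (A : Set ℕ) (n : ℕ) : List ℕ :=
  (List.range (n + 1)).filter (fun i => decide (i ∈ A))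

theorem mem_listOfSet {A : Set ℕ} {n i : ℕ} :
    i ∈ listOfSet A n ↔ i ∈ A ∧ i ≤ n := by
  classical
  rw [listOfSet, List.mem_filter, List.mem_range]
  simp [Nat.lt_succ_iff]
  tauto

theorem listOfSet_sorted (A : Set ℕ) (n : ℕ) : List.Pairwise (· < ·) (listOfSet A n) :=
  (show List.Pairwise (· < ·) (List.range (n + 1)) from List.pairwise_lt_range).sublist List.filter_sublist

theorem listOfSet_pos {A : Set ℕ} (hpos : ∀ x ∈ A, 0 < x) (n : ℕ) :
    ∀ e ∈ listOfSet A n, 0 < e := fun e he => hpos e (mem_listOfSet.1 he).1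

theorem listOfSet_prefix (A : Set ℕ) {n n' : ℕ} (h : n ≤ n') :
    listOfSet A n <+: listOfSet A n' := by
  classical
  induction n' with
  | zero => rw [Nat.le_zero.1 h]
  | succ k ih =>
    rcases Nat.lt_succ_iff_lt_or_eq.1 (Nat.lt_succ_of_le h) with h1 | h1
    · have : listOfSet A (k + 1) = listOfSet A k ++
          (List.filter (fun i => decide (i ∈ A)) [k + 1]) := by
        rw [listOfSet, listOfSet, List.range_succ, List.filter_append]
      rw [this]
      exact (ih (Nat.lt_succ_iff.1 h1)).trans ⟨_, rfl⟩
    · rw [h1]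

theorem listOfSet_filter_le (A : Set ℕ) {n' n : ℕ} (h : n' ≤ n) :
    listOfSet A n' = (listOfSet A n).filter (fun e => decide (e ≤ n')) := by
  classical
  induction n with
  | zero =>
    rw [Nat.le_zero.1 h]
    symm
    rw [List.filter_eq_self]
    intro a ha
    simp [Nat.le_zero]
    exact Nat.le_zero.1 ((mem_listOfSet.1 ha).2)
  | succ k ih =>
    rcases Nat.lt_succ_iff_lt_or_eq.1 (Nat.lt_succ_of_le h) with h1 | h1
    · have h2 : listOfSet A (k + 1) = listOfSet A k ++
          (List.filter (fun i => decide (i ∈ A)) [k + 1]) := by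
        rw [listOfSet, listOfSet, List.range_succ, List.filter_append]
      rw [h2, List.filter_append, ← ih (Nat.lt_succ_iff.1 h1)]
      have : List.filter (fun e => decide (e ≤ n')) (List.filter (fun i => decide (i ∈ A)) [k + 1]) = [] := by
        rw [List.filter_eq_nil_iff]
        intro a ha
        have : a = k + 1 := by
          have := (List.mem_filter.1 ha).1
          simpa using this
        subst this
        simp
        omega
      rw [this, List.append_nil]
    · subst h1
      symm
      rw [List.filter_eq_self]
      intro a ha
      simp
      exact (mem_listOfSet.1 ha).2

/-- the set B -/
def Bset (A : Set ℕ) : Set ℕ := {x | x ∈ blocksF (listOfSet A x)}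

theorem mem_stage {A : Set ℕ} (hpos : ∀ x ∈ A, 0 < x) {x n : ℕ}
    (h : x ∈ blocksF (listOfSet A n)) : x ∈ Bset A := by
  rcases le_or_gt n x with hle | hlt
  · obtain ⟨T, hT⟩ := listOfSet_prefix A hle
    rw [Bset, Set.mem_setOf_eq, ← hT]
    exact (blocksF_prefix (listOfSet A n) T).subset h
  · obtain ⟨Q, R, hQR, hQle, hQb⟩ := mem_blocks_dom (listOfSet_sorted A n)
      (listOfSet_pos hpos n) h
    have hfil : listOfSet A x = Q ++ R.filter (fun e => decide (e ≤ x)) := by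
      rw [listOfSet_filter_le A (le_of_lt hlt), hQR, List.filter_append]
      congr 1
      rw [List.filter_eq_self]
      intro a ha
      simp
      exact hQle a ha
    rw [Bset, Set.mem_setOf_eq, hfil]
    exact (blocksF_prefix Q _).subset hQb

/-- lift membership in Bset to any stage ≥ x -/
theorem stage_lift {A : Set ℕ} {x n : ℕ} (hx : x ∈ Bset A) (h : x ≤ n) :
    x ∈ blocksF (listOfSet A n) := by
  obtain ⟨T, hT⟩ := listOfSet_prefix A h
  rw [← hT]
  exact (blocksF_prefix (listOfSet A x) T).subset hx

theorem Bset_pos {A : Set ℕ} (hpos : ∀ x ∈ A, 0 < x) : ∀ x ∈ Bset A, 0 < x := by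
  intro x hx
  obtain ⟨t, G, ht, hps, hG, hGsub, hdisj, hres, hposo, hmu, hchain⟩ :=
    inv_run (listOfSet_sorted A x) (listOfSet_pos hpos x)
  exact hposo x hx

theorem Bset_apart {A : Set ℕ} (hpos : ∀ x ∈ A, 0 < x) : Apart (Bset A) := by
  intro x hx y hy hxy
  set n := max x y with hn
  have hxm : x ∈ blocksF (listOfSet A n) := stage_lift hx (le_max_left x y)
  have hym : y ∈ blocksF (listOfSet A n) := stage_lift hy (le_max_right x y)
  obtain ⟨t, G, ht, hps, hG, hGsub, hdisj, hres, hposo, hmu, hchain⟩ :=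
    inv_run (listOfSet_sorted A n) (listOfSet_pos hpos n)
  set out := blocksF (listOfSet A n) with hout
  have hchain2 : List.Pairwise (fun u v => mu u < lam v) out := hchain
  obtain ⟨i, hxi⟩ := List.mem_iff_get.1 hxm
  obtain ⟨j, hyj⟩ := List.mem_iff_get.1 hym
  have hij : (i : ℕ) ≠ (j : ℕ) := by
    intro hcon
    apply Nat.ne_of_lt hxy
    rw [← hxi, ← hyj]
    congr 1
    exact Fin.ext hcon
  rcases Nat.lt_or_ge i j with hlt2 | hge
  · have := List.pairwise_iff_get.1 hchain2 i j hlt2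
    rw [hxi, hyj] at this
    exact this
  · exfalso
    have hji : (j : Fin out.length) < i := lt_of_le_of_ne hge (by
      intro hcon; exact hij (by rw [hcon]))
    have := List.pairwise_iff_get.1 hchain2 j i hji
    rw [hxi, hyj] at this
    have := lt_of_mu_lt_lam (Bset_pos hpos x hx) this
    omega

end S5
namespace S5

theorem listOfSet_len_unbounded {A : Set ℕ} (hinf : A.Infinite) (k : ℕ) :
    ∃ n, k ≤ (listOfSet A n).length := by
  induction k with
  | zero => exact ⟨0, Nat.zero_le _⟩
  | succ k ih =>
    obtain ⟨n, hn⟩ := ih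
    obtain ⟨a, haA, han⟩ := hinf.exists_gt n
    refine ⟨a, ?_⟩
    obtain ⟨T, hT⟩ := listOfSet_prefix A (le_of_lt han)
    have haT : a ∈ T := by
      have h1 : a ∈ listOfSet A a := mem_listOfSet.2 ⟨haA, le_refl a⟩
      have h2 : a ∉ listOfSet A n := fun hc => by
        have := (mem_listOfSet.1 hc).2; omega
      rw [← hT] at h1
      rcases List.mem_append.1 h1 with h | h
      · exact absurd h h2
      · exact h
    have : T.length ≥ 1 := List.length_pos_iff.2 (fun hc => by rw [hc] at haT; simp at haT)
    have := congrArg List.length hT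
    rw [List.length_append] at this
    omega

theorem blocks_len_unbounded {A : Set ℕ} (hpos : ∀ x ∈ A, 0 < x) (hinf : A.Infinite) (k : ℕ) :
    ∃ n, k ≤ (blocksF (listOfSet A n)).length := by
  induction k with
  | zero => exact ⟨0, Nat.zero_le _⟩
  | succ k ih =>
    obtain ⟨n, hn⟩ := ih
    set m := (run (listOfSet A n)).1 with hm
    obtain ⟨n'', hn''⟩ := listOfSet_len_unbounded hinf ((listOfSet A n).length + 2 ^ m + 1)
    obtain ⟨T, hT⟩ := listOfSet_prefix A (le_max_left n n'')
    have hlenT : 2 ^ m + 1 ≤ T.length := by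
      have h1 : (listOfSet A n'').length ≤ (listOfSet A (max n n'')).length :=
        (listOfSet_prefix A (le_max_right n n'')).length_le
      have h2 := congrArg List.length hT
      rw [List.length_append] at h2
      omega
    have hgrow := out_grows (L := listOfSet A n) (T := T)
      (by rw [hT]; exact listOfSet_sorted A (max n n''))
      (by rw [hT]; exact listOfSet_pos hpos (max n n'')) hlenT
    rw [hT] at hgrow
    exact ⟨max n n'', by omega⟩

theorem blocks_nodup {A : Set ℕ} (hpos : ∀ x ∈ A, 0 < x) (n : ℕ) :
    (blocksF (listOfSet A n)).Nodup ∧ ∀ b ∈ blocksF (listOfSet A n), 0 < b := by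
  obtain ⟨t, G, ht, hps, hG, hGsub, hdisj, hres, hposo, hmu, hchain⟩ :=
    inv_run (listOfSet_sorted A n) (listOfSet_pos hpos n)
  have hposo' : ∀ b ∈ blocksF (listOfSet A n), 0 < b := hposo
  have hchain2 : List.Pairwise (fun u v => mu u < lam v) (blocksF (listOfSet A n)) := hchain
  refine ⟨?_, hposo'⟩
  refine hchain2.imp_of_mem ?_
  intro u v hu hv h
  exact Nat.ne_of_lt (lt_of_mu_lt_lam (hposo' v hv) h)

theorem Bset_infinite {A : Set ℕ} (hpos : ∀ x ∈ A, 0 < x) (hinf : A.Infinite) :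
    (Bset A).Infinite := by
  by_contra hfin
  rw [Set.not_infinite] at hfin
  obtain ⟨c, hc⟩ := hfin.bddAbove
  simp only [upperBounds, Set.mem_setOf_eq] at hc
  obtain ⟨n, hn⟩ := blocks_len_unbounded hpos hinf (c + 2)
  obtain ⟨hnd, hpos2⟩ := blocks_nodup hpos n
  have hall : ∀ y ∈ blocksF (listOfSet A n), y < c + 1 := by
    intro y hy
    have : y ∈ Bset A := mem_stage hpos hy
    have := hc this
    omega
  have := nodup_bound hnd hall
  omega

theorem extract {G : List (Finset ℕ)} {out : List ℕ}
    (hG : List.Forall₂ (fun (F : Finset ℕ) b => F.sum id = b ∧ F.Nonempty) G out)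
    (hdisj : List.Pairwise Disjoint G) :
    ∀ S : Finset ℕ, (∀ x ∈ S, x ∈ out) →
      ∃ T : Finset ℕ, T.sum id = S.sum id ∧ (S.Nonempty → T.Nonempty) ∧
        ∀ e ∈ T, ∃ F ∈ G, e ∈ F := by
  induction hG with
  | nil =>
    intro S hS
    have : S = ∅ := Finset.eq_empty_of_forall_notMem (fun x hx => by simp at hS; exact hS x hx)
    subst this
    exact ⟨∅, by simp, by simp, by simp⟩
  | @cons F b G' out' hFb htail ih =>
    intro S hS
    obtain ⟨hd, htl⟩ := List.pairwise_cons.1 hdisj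
    by_cases hbS : b ∈ S
    · have hS' : ∀ x ∈ S.erase b, x ∈ out' := by
        intro x hx
        obtain ⟨hxb, hxS⟩ := Finset.mem_erase.1 hx
        rcases List.mem_cons.1 (hS x hxS) with h | h
        · exact absurd h hxb
        · exact h
      obtain ⟨T', hT's, hT'ne, hT'mem⟩ := ih htl (S.erase b) hS'
      have hdisjFT : Disjoint F T' := by
        rw [Finset.disjoint_left]
        intro e heF heT
        obtain ⟨F', hF', heF'⟩ := hT'mem e heT
        exact (Finset.disjoint_left.1 (hd F' hF')) heF heF'
      refine ⟨F ∪ T', ?_, fun _ => ?_, ?_⟩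
      · rw [Finset.sum_union hdisjFT, hFb.1, hT's]
        exact Finset.add_sum_erase S id hbS
      · obtain ⟨e, he⟩ := hFb.2
        exact ⟨e, Finset.mem_union_left _ he⟩
      · intro e he
        rcases Finset.mem_union.1 he with h | h
        · exact ⟨F, List.mem_cons_self, h⟩
        · obtain ⟨F', hF', heF'⟩ := hT'mem e h
          exact ⟨F', List.mem_cons_of_mem F hF', heF'⟩
    · have hS' : ∀ x ∈ S, x ∈ out' := by
        intro x hx
        rcases List.mem_cons.1 (hS x hx) with h | h
        · exact absurd (h ▸ hx) hbS
        · exact h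
      obtain ⟨T', hT's, hT'ne, hT'mem⟩ := ih htl S hS'
      exact ⟨T', hT's, hT'ne, fun e he => by
        obtain ⟨F', hF', heF'⟩ := hT'mem e he
        exact ⟨F', List.mem_cons_of_mem F hF', heF'⟩⟩

theorem Bset_FS {A : Set ℕ} (hpos : ∀ x ∈ A, 0 < x) : FS (Bset A) ⊆ FS A := by
  intro x hx
  obtain ⟨S, hS, hSne, hsum⟩ := hx
  set N := S.max' hSne with hN
  have hmem : ∀ s ∈ S, s ∈ blocksF (listOfSet A N) := by
    intro s hs
    exact stage_lift (hS hs) (S.le_max' s hs)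
  obtain ⟨t, G, ht, hps, hG, hGsub, hdisj, hres, hposo, hmu, hchain⟩ :=
    inv_run (listOfSet_sorted A N) (listOfSet_pos hpos N)
  obtain ⟨T, hTs, hTne, hTmem⟩ := extract hG hdisj S hmem
  refine ⟨T, ?_, hTne hSne, by rw [hTs, hsum]⟩
  intro e he
  obtain ⟨F, hF, heF⟩ := hTmem e he
  have := hGsub F hF e heF
  exact (mem_listOfSet.1 (List.mem_of_mem_take this)).1

end S5
namespace S5

/-! ### Computability of the block machine -/

def listOfMask (n s : ℕ) : List ℕ :=
  (List.range (n + 1)).filter (fun i => decide (s / 2 ^ i % 2 = 1))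

def Fmain (n s : ℕ) : ℕ :=
  if (blocksF (listOfMask n s)).idxOf n < (blocksF (listOfMask n s)).length then 1 else 0

theorem primrec_pow : Primrec₂ ((· ^ ·) : ℕ → ℕ → ℕ) :=
  Primrec₂.unpaired'.1 Nat.Primrec.pow

theorem primrec_filter {α β : Type} [Primcodable α] [Primcodable β]
    {p : α → β → Bool} (hp : Primrec₂ p) :
    Primrec (fun a : α × List β => a.2.filter (p a.1)) := by
  have h := Primrec.list_foldr (Primrec.snd : Primrec fun a : α × List β => a.2)
    (Primrec.const ([] : List β))
    (Primrec.cond (hp.comp (Primrec.fst.comp Primrec.fst) (Primrec.fst.comp Primrec.snd))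
      (Primrec.list_cons.comp (Primrec.fst.comp Primrec.snd) (Primrec.snd.comp Primrec.snd))
      (Primrec.snd.comp Primrec.snd)).to₂
  exact h.of_eq fun a => by simpa using (List.filter_eq_foldr (p a.1) a.2).symm

theorem primrec_step : Primrec₂ step := by
  have hm : Primrec fun z : (ℕ × List ℕ × List ℕ) × ℕ => z.1.1 := Primrec.fst.comp Primrec.fst
  have hps : Primrec fun z : (ℕ × List ℕ × List ℕ) × ℕ => z.1.2.1 :=
    Primrec.fst.comp (Primrec.snd.comp Primrec.fst)
  have hout : Primrec fun z : (ℕ × List ℕ × List ℕ) × ℕ => z.1.2.2 :=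
    Primrec.snd.comp (Primrec.snd.comp Primrec.fst)
  have hx : Primrec fun z : (ℕ × List ℕ × List ℕ) × ℕ => z.2 := Primrec.snd
  have hc : Primrec fun z : (ℕ × List ℕ × List ℕ) × ℕ => z.1.2.1.headI + z.2 :=
    Primrec.nat_add.comp (Primrec.list_headI.comp hps) hx
  -- hits
  have hp : Primrec₂ (fun (cm : ℕ × ℕ) (y : ℕ) => decide (cm.1 % 2 ^ cm.2 = y % 2 ^ cm.2)) := by
    have h1 : Primrec fun w : (ℕ × ℕ) × ℕ => w.1.1 % 2 ^ w.1.2 :=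
      Primrec.nat_mod.comp (Primrec.fst.comp Primrec.fst)
        (primrec_pow.comp (Primrec.const 2) (Primrec.snd.comp Primrec.fst))
    have h2 : Primrec fun w : (ℕ × ℕ) × ℕ => w.2 % 2 ^ w.1.2 :=
      Primrec.nat_mod.comp Primrec.snd
        (primrec_pow.comp (Primrec.const 2) (Primrec.snd.comp Primrec.fst))
    exact (Primrec.eq.comp h1 h2).decide
  have hhits : Primrec fun z : (ℕ × List ℕ × List ℕ) × ℕ =>
      z.1.2.1.filter (fun y => decide ((z.1.2.1.headI + z.2) % 2 ^ z.1.1 = y % 2 ^ z.1.1)) := by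
    have := (primrec_filter hp).comp
      ((Primrec.pair hc hm).pair hps)
    exact this
  have hcond : PrimrecPred fun z : (ℕ × List ℕ × List ℕ) × ℕ =>
      (z.1.2.1.filter (fun y => decide ((z.1.2.1.headI + z.2) % 2 ^ z.1.1 = y % 2 ^ z.1.1))).length = 0 :=
    Primrec.eq.comp (Primrec.list_length.comp hhits) (Primrec.const 0)
  have hb : Primrec fun z : (ℕ × List ℕ × List ℕ) × ℕ =>
      (z.1.2.1.headI + z.2) -
        (z.1.2.1.filter (fun y => decide ((z.1.2.1.headI + z.2) % 2 ^ z.1.1 = y % 2 ^ z.1.1))).headI :=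
    Primrec.nat_sub.comp hc (Primrec.list_headI.comp hhits)
  have hbr1 : Primrec fun z : (ℕ × List ℕ × List ℕ) × ℕ =>
      (z.1.1, (z.1.2.1.headI + z.2) :: z.1.2.1, z.1.2.2) :=
    hm.pair ((Primrec.list_cons.comp hc hps).pair hout)
  have hbr2 : Primrec fun z : (ℕ × List ℕ × List ℕ) × ℕ =>
      ((z.1.2.1.headI + z.2) -
        (z.1.2.1.filter (fun y => decide ((z.1.2.1.headI + z.2) % 2 ^ z.1.1 = y % 2 ^ z.1.1))).headI,
       ([0] : List ℕ),
       z.1.2.2 ++ [(z.1.2.1.headI + z.2) -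
        (z.1.2.1.filter (fun y => decide ((z.1.2.1.headI + z.2) % 2 ^ z.1.1 = y % 2 ^ z.1.1))).headI]) :=
    hb.pair ((Primrec.const ([0] : List ℕ)).pair (Primrec.list_concat.comp hout hb))
  have := Primrec.ite hcond hbr1 hbr2
  exact this.of_eq fun z => by rw [step]

theorem primrec_blocksF : Primrec blocksF := by
  have hrun : Primrec run := by
    have h := Primrec.list_foldl (Primrec.id : Primrec fun L : List ℕ => L)
      (Primrec.const ((0, [0], []) : ℕ × List ℕ × List ℕ))
      ((primrec_step.comp (Primrec.fst.comp Primrec.snd) (Primrec.snd.comp Primrec.snd)).to₂)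
    exact h.of_eq fun L => rfl
  exact Primrec.snd.comp (Primrec.snd.comp hrun)

theorem primrec_listOfMask : Primrec₂ listOfMask := by
  have hp : Primrec₂ (fun (s : ℕ) (i : ℕ) => decide (s / 2 ^ i % 2 = 1)) := by
    have h1 : Primrec fun w : ℕ × ℕ => w.1 / 2 ^ w.2 % 2 :=
      Primrec.nat_mod.comp
        (Primrec.nat_div.comp Primrec.fst (primrec_pow.comp (Primrec.const 2) Primrec.snd))
        (Primrec.const 2)
    exact (Primrec.eq.comp h1 (Primrec.const 1)).decide
  have := (primrec_filter hp).comp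
    ((Primrec.snd : Primrec fun z : ℕ × ℕ => z.2).pair
      (Primrec.list_range.comp (Primrec.succ.comp Primrec.fst)))
  exact this.of_eq fun z => rfl

theorem computable_Fmain : Computable (Nat.unpaired Fmain) := by
  have hFm : Primrec₂ Fmain := by
    have hl : Primrec fun z : ℕ × ℕ => blocksF (listOfMask z.1 z.2) :=
      primrec_blocksF.comp (primrec_listOfMask.comp Primrec.fst Primrec.snd)
    have hcond : PrimrecPred fun z : ℕ × ℕ =>
        (blocksF (listOfMask z.1 z.2)).idxOf z.1 < (blocksF (listOfMask z.1 z.2)).length :=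
      Primrec.nat_lt.comp (Primrec.list_idxOf.comp Primrec.fst hl)
        (Primrec.list_length.comp hl)
    exact Primrec.ite hcond (Primrec.const 1) (Primrec.const 0)
  exact (Primrec₂.unpaired.2 hFm).to_comp

end S5
namespace S5

theorem recIn_of_partrec {g f : ℕ →. ℕ} (h : Nat.Partrec f) : OracleRecursiveIn g f := by
  induction h with
  | zero => exact .zero
  | succ => exact .succ
  | left => exact .left
  | right => exact .right
  | pair _ _ ih1 ih2 => exact .pair ih1 ih2
  | comp _ _ ih1 ih2 => exact .comp ih1 ih2
  | prec _ _ ih1 ih2 => exact .prec ih1 ih2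
  | rfind _ ih => exact .rfind ih

theorem recIn_of_eq {g f f' : ℕ →. ℕ} (h : OracleRecursiveIn g f) (H : ∀ n, f n = f' n) :
    OracleRecursiveIn g f' := (funext H : f = f') ▸ h

theorem recIn_of_computable {g : ℕ →. ℕ} {F : ℕ → ℕ} (h : Computable F) :
    OracleRecursiveIn g ↑F := recIn_of_partrec (Partrec.nat_iff.1 h.partrec)

theorem recIn_comp_total {g : ℕ →. ℕ} {F G : ℕ → ℕ} (hF : OracleRecursiveIn g ↑F)
    (hG : OracleRecursiveIn g ↑G) : OracleRecursiveIn g ↑(fun n => F (G n)) := by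
  refine recIn_of_eq (.comp hF hG) fun n => ?_
  simp [PFun.coe_val, Part.bind_some]
  exact Part.bind_some (G n) (fun x => Part.some (F x))

theorem recIn_pair_total {g : ℕ →. ℕ} {F G : ℕ → ℕ} (hF : OracleRecursiveIn g ↑F)
    (hG : OracleRecursiveIn g ↑G) : OracleRecursiveIn g ↑(fun n => Nat.pair (F n) (G n)) := by
  refine recIn_of_eq (.pair hF hG) fun n => ?_
  simp [PFun.coe_val, Seq.seq]

theorem part_rec_eq (F H : ℕ → ℕ) (a : ℕ) : ∀ n : ℕ,
    (Nat.rec (Part.some (F a))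
      (fun y IH => IH.bind fun i => Part.some (H (Nat.pair a (Nat.pair y i)))) n : Part ℕ) =
    Part.some (Nat.rec (F a) (fun y IH => H (Nat.pair a (Nat.pair y IH))) n)
  | 0 => rfl
  | (k + 1) => by
    show (Nat.rec (Part.some (F a))
      (fun y IH => IH.bind fun i => Part.some (H (Nat.pair a (Nat.pair y i)))) k : Part ℕ).bind
        (fun i => Part.some (H (Nat.pair a (Nat.pair k i)))) = _
    rw [part_rec_eq F H a k, Part.bind_some]

theorem recIn_prec_total {g : ℕ →. ℕ} {F H : ℕ → ℕ} (hF : OracleRecursiveIn g ↑F)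
    (hH : OracleRecursiveIn g ↑H) :
    OracleRecursiveIn g ↑(Nat.unpaired fun a n =>
      (n.rec (F a) (fun y IH => H (Nat.pair a (Nat.pair y IH))) : ℕ)) := by
  refine recIn_of_eq (.prec hF hH) fun p => ?_
  show (Nat.rec (Part.some (F p.unpair.1))
      (fun y IH => IH.bind fun i => Part.some (H (Nat.pair p.unpair.1 (Nat.pair y i))))
      p.unpair.2 : Part ℕ) = _
  rw [part_rec_eq]
  rfl

/-- the indicator function of A as a total function -/
noncomputable def chiF (A : Set ℕ) : ℕ → ℕ := fun n => A.indicator (fun _ => 1) n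

theorem chi_eq_coe (A : Set ℕ) : chi A = ↑(chiF A) := rfl

theorem recIn_chiF (A : Set ℕ) : OracleRecursiveIn (chi A) ↑(chiF A) :=
  chi_eq_coe A ▸ OracleRecursiveIn.oracle

/-- bitmask of A on [0, n) -/
noncomputable def GAf (A : Set ℕ) : ℕ → ℕ :=
  fun n => Nat.rec 0 (fun y i => i + chiF A y * 2 ^ y) n

theorem chiF_le_one (A : Set ℕ) (n : ℕ) : chiF A n ≤ 1 := by
  classical
  rw [chiF, Set.indicator_apply]
  split <;> simp

theorem GAf_lt (A : Set ℕ) (n : ℕ) : GAf A n < 2 ^ n := by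
  induction n with
  | zero => simp [GAf]
  | succ k ih =>
    have h1 : GAf A (k + 1) = GAf A k + chiF A k * 2 ^ k := rfl
    have := chiF_le_one A k
    have h2 : chiF A k * 2 ^ k ≤ 2 ^ k := by
      calc chiF A k * 2 ^ k ≤ 1 * 2 ^ k := Nat.mul_le_mul_right _ this
        _ = 2 ^ k := one_mul _
    rw [h1, pow_succ]
    omega

theorem GAf_bit (A : Set ℕ) {i n : ℕ} (h : i < n) : GAf A n / 2 ^ i % 2 = chiF A i := by
  induction n with
  | zero => omega
  | succ k ih =>
    have h1 : GAf A (k + 1) = GAf A k + chiF A k * 2 ^ k := rfl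
    rcases Nat.lt_succ_iff_lt_or_eq.1 h with h2 | h2
    · have hsplit : 2 ^ k = 2 ^ (k - i) * 2 ^ i := by
        rw [← pow_add]
        congr 1
        omega
      have : GAf A (k + 1) = GAf A k + (chiF A k * 2 ^ (k - i)) * 2 ^ i := by
        rw [h1, hsplit]; ring
      rw [this, Nat.add_mul_div_right _ _ (Nat.two_pow_pos i)]
      have hki : 1 ≤ k - i := by omega
      have : chiF A k * 2 ^ (k - i) = (chiF A k * 2 ^ (k - i - 1)) * 2 := by
        have : 2 ^ (k - i) = 2 ^ (k - i - 1) * 2 := by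
          rw [← pow_succ]
          congr 1
          omega
        rw [this]; ring
      rw [this, Nat.add_mul_mod_self_right]
      exact ih h2
    · subst h2
      rw [h1, Nat.add_mul_div_right _ _ (Nat.two_pow_pos i),
        Nat.div_eq_of_lt (GAf_lt A i), Nat.zero_add]
      exact Nat.mod_eq_of_lt (by have := chiF_le_one A i; omega)

theorem chiF_eq_one_iff {A : Set ℕ} {i : ℕ} : chiF A i = 1 ↔ i ∈ A := by
  classical
  rw [chiF, Set.indicator_apply]
  split <;> simp_all

theorem listOfMask_eq (A : Set ℕ) (n : ℕ) :
    listOfMask n (GAf A (n + 1)) = listOfSet A n := by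
  classical
  rw [listOfMask, listOfSet]
  apply List.filter_congr
  intro i hi
  have hin : i < n + 1 := List.mem_range.1 hi
  rw [GAf_bit A hin]
  by_cases h : i ∈ A
  · simp [chiF_eq_one_iff.2 h, h]
  · have : chiF A i ≠ 1 := fun hc => h (chiF_eq_one_iff.1 hc)
    simp [this, h]

theorem Fmain_indicator (A : Set ℕ) (n : ℕ) :
    Fmain n (GAf A (n + 1)) = (Bset A).indicator (fun _ => 1) n := by
  classical
  rw [Fmain, listOfMask_eq, Set.indicator_apply]
  by_cases h : n ∈ Bset A
  · rw [if_pos (List.idxOf_lt_length_iff.2 h), if_pos h]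
  · rw [if_neg (fun hc => h (List.idxOf_lt_length_iff.1 hc)), if_neg h]

theorem recIn_GAf (A : Set ℕ) : OracleRecursiveIn (chi A) ↑(GAf A) := by
  -- step function for prec
  have hu : Computable fun k : ℕ => k.unpair.2.unpair.1 :=
    (Primrec.fst.comp (Primrec.unpair.comp (Primrec.snd.comp Primrec.unpair))).to_comp
  have hr : Computable fun q : ℕ =>
      q.unpair.2.unpair.2.unpair.2 + q.unpair.1 * 2 ^ q.unpair.2.unpair.2.unpair.1 := by
    have h1 : Primrec fun q : ℕ => q.unpair.2.unpair.2.unpair.2 :=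
      Primrec.snd.comp (Primrec.unpair.comp (Primrec.snd.comp
        (Primrec.unpair.comp (Primrec.snd.comp Primrec.unpair))))
    have h2 : Primrec fun q : ℕ => q.unpair.1 := Primrec.fst.comp Primrec.unpair
    have h3 : Primrec fun q : ℕ => q.unpair.2.unpair.2.unpair.1 :=
      Primrec.fst.comp (Primrec.unpair.comp (Primrec.snd.comp
        (Primrec.unpair.comp (Primrec.snd.comp Primrec.unpair))))
    exact (Primrec.nat_add.comp h1 (Primrec.nat_mul.comp h2
      (primrec_pow.comp (Primrec.const 2) h3))).to_comp
  have hH : OracleRecursiveIn (chi A) ↑(fun k : ℕ =>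
      k.unpair.2.unpair.2 + chiF A (k.unpair.2.unpair.1) * 2 ^ (k.unpair.2.unpair.1)) := by
    have hchiu : OracleRecursiveIn (chi A) ↑(fun k : ℕ => chiF A (k.unpair.2.unpair.1)) :=
      recIn_comp_total (recIn_chiF A) (recIn_of_computable hu)
    have hpair : OracleRecursiveIn (chi A) ↑(fun k : ℕ =>
        Nat.pair (chiF A (k.unpair.2.unpair.1)) k) :=
      recIn_pair_total hchiu (recIn_of_computable Computable.id)
    have := recIn_comp_total (recIn_of_computable hr) hpair
    refine recIn_of_eq this fun k => ?_
    simp [Nat.unpair_pair]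
  have hF0 : OracleRecursiveIn (chi A) ↑(fun _ : ℕ => (0 : ℕ)) :=
    recIn_of_computable (Computable.const 0)
  have hprec := recIn_prec_total hF0 hH
  have hpair0 : OracleRecursiveIn (chi A) ↑(fun n : ℕ => Nat.pair 0 n) :=
    recIn_of_computable (Primrec.to_comp (Primrec₂.natPair.comp (Primrec.const 0) Primrec.id))
  have hcomp := recIn_comp_total hprec hpair0
  refine recIn_of_eq hcomp fun n => ?_
  simp only [PFun.coe_val, Part.some_inj, Nat.unpaired, Nat.unpair_pair]
  rfl

theorem turingRed_Bset (A : Set ℕ) : TuringRed (Bset A) A := by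
  rw [TuringRed]
  have h1 : OracleRecursiveIn (chi A) ↑(fun n : ℕ => Nat.pair n (GAf A (n + 1))) :=
    recIn_pair_total (recIn_of_computable Computable.id)
      (recIn_comp_total (recIn_GAf A) (recIn_of_computable Computable.succ))
  have h2 := recIn_comp_total (recIn_of_computable computable_Fmain) h1
  refine recIn_of_eq h2 fun n => ?_
  show Part.some (Nat.unpaired Fmain (Nat.pair n (GAf A (n + 1)))) = chi (Bset A) n
  rw [Nat.unpaired, Nat.unpair_pair]
  show Part.some (Fmain n (GAf A (n + 1))) = _
  rw [Fmain_indicator]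
  rfl

end S5

theorem stmt5 (A : Set ℕ) (hpos : ∀ x ∈ A, 0 < x) (hinf : A.Infinite) :
    ∃ B : Set ℕ, (∀ x ∈ B, 0 < x) ∧ B.Infinite ∧ TuringRed B A ∧
      Apart B ∧ FS B ⊆ FS A := by
  exact ⟨S5.Bset A, S5.Bset_pos hpos, S5.Bset_infinite hpos hinf, S5.turingRed_Bset A,
    S5.Bset_apart hpos, S5.Bset_FS hpos⟩
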